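/- Let n ≥ 6 be even, and let G be the graph obtained from the friendship graph F_{(n−2)/2} by attaching a pendant edge at the central vertex (the vertex adjacent to all others). Then ρ(G) < √(2n−4). -/

import Mathlib

open Finset


/-- The spectral radius (largest adjacency eigenvalue) of a finite simple graph. -/
noncomputable def specRad {V : Type*} [Finite V] (G : SimpleGraph V) : ℝ :=
  letI := Fintype.ofFinite V
  letI := Classical.decEq V
  letI := Classical.decRel G.Adj
  sSup (spectrum ℝ (G.adjMatrix ℝ))

/-- The friendship graph `F_k` (with central vertex `0` and the `k` triangles formed by the
pairs `{2i+1, 2i+2}` for `0 ≤ i < k`) together with a pendant edge attached at the central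
vertex: the extra vertex `2k+1` is adjacent only to the center `0`. -/
def friendshipPendant (k : ℕ) : SimpleGraph (Fin (2 * k + 2)) :=
  SimpleGraph.fromRel (fun i j => i.val = 0 ∨
    (1 ≤ i.val ∧ i.val ≤ 2 * k ∧ 1 ≤ j.val ∧ j.val ≤ 2 * k ∧
      (i.val - 1) / 2 = (j.val - 1) / 2))

lemma gersh {ι : Type*} [Fintype ι] [DecidableEq ι] (M : Matrix ι ι ℝ)
    (w : ι → ℝ) (t : ℝ) (hw : ∀ i, 0 < w i)
    (hrow : ∀ i, ∑ j, |M i j| * w j ≤ t * w i) :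
    ∀ μ ∈ spectrum ℝ M, |μ| ≤ t := by
  intro μ hμ
  rw [spectrum.mem_iff] at hμ
  have hdet : (algebraMap ℝ (Matrix ι ι ℝ) μ - M).det = 0 := by
    by_contra h
    exact hμ ((Matrix.isUnit_iff_isUnit_det _).2 (isUnit_iff_ne_zero.2 h))
  obtain ⟨v, hv0, hv⟩ := (Matrix.exists_mulVec_eq_zero_iff).2 hdet
  have hMv : ∀ i, ∑ j, M i j * v j = μ * v i := by
    intro i
    have h1 := congrFun hv i
    rw [Matrix.sub_mulVec, Algebra.algebraMap_eq_smul_one, Matrix.smul_mulVec,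
      Matrix.one_mulVec] at h1
    have h2 : μ * v i - (M.mulVec v) i = 0 := h1
    have h3 : (M.mulVec v) i = ∑ j, M i j * v j := rfl
    linarith [h3 ▸ h2]
  obtain ⟨j₀, hj₀⟩ := Function.ne_iff.1 hv0
  obtain ⟨i, -, hmax⟩ := Finset.exists_max_image univ (fun j => |v j| / w j) ⟨j₀, mem_univ _⟩
  have hvi : 0 < |v i| := by
    have h1 : 0 < |v j₀| / w j₀ := div_pos (abs_pos.2 hj₀) (hw _)
    have h2 : 0 < |v i| / w i := lt_of_lt_of_le h1 (hmax j₀ (mem_univ _))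
    rcases div_pos_iff.1 h2 with ⟨h, _⟩ | ⟨_, h⟩
    · exact h
    · linarith [hw i]
  have hbound : ∀ j, |v j| * w i ≤ |v i| * w j := by
    intro j
    have := hmax j (mem_univ _)
    exact (div_le_div_iff₀ (hw j) (hw i)).1 this
  have step1 : |μ| * |v i| ≤ ∑ j, |M i j| * |v j| := by
    calc |μ| * |v i| = |μ * v i| := (abs_mul _ _).symm
      _ = |∑ j, M i j * v j| := by rw [hMv i]
      _ ≤ ∑ j, |M i j * v j| := Finset.abs_sum_le_sum_abs _ _
      _ = ∑ j, |M i j| * |v j| := by simp [abs_mul]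
  have key : (∑ j, |M i j| * |v j|) * w i ≤ (∑ j, |M i j| * w j) * |v i| := by
    rw [Finset.sum_mul, Finset.sum_mul]
    apply Finset.sum_le_sum
    intro j _
    nlinarith [mul_le_mul_of_nonneg_left (hbound j) (abs_nonneg (M i j))]
  have chain : |μ| * (|v i| * w i) ≤ t * (|v i| * w i) := by
    have s2 : |μ| * |v i| * w i ≤ (∑ j, |M i j| * |v j|) * w i :=
      mul_le_mul_of_nonneg_right step1 (le_of_lt (hw i))
    have s3 : (∑ j, |M i j| * w j) * |v i| ≤ t * w i * |v i| :=
      mul_le_mul_of_nonneg_right (hrow i) (abs_nonneg _)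
    nlinarith [s2, key, s3]
  have hpos : 0 < |v i| * w i := mul_pos hvi (hw i)
  exact le_of_mul_le_mul_right (by nlinarith [chain]) hpos

def adjN (k v m : ℕ) : Prop :=
  v ≠ m ∧ (v = 0 ∨ m = 0 ∨
    (1 ≤ v ∧ v ≤ 2 * k ∧ 1 ≤ m ∧ m ≤ 2 * k ∧ (v - 1) / 2 = (m - 1) / 2))

instance (k v m : ℕ) : Decidable (adjN k v m) := by unfold adjN; infer_instance

noncomputable def wN (k : ℕ) (t : ℝ) (j : ℕ) : ℝ :=
  if j = 0 then 1 else if j = 2 * k + 1 then 1 / t else 1 / (t - 1)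

lemma adj_iff (k : ℕ) [DecidableRel (friendshipPendant k).Adj] (i j : Fin (2 * k + 2)) :
    (friendshipPendant k).Adj i j ↔ adjN k i.val j.val := by
  simp only [friendshipPendant, SimpleGraph.fromRel_adj, Ne, Fin.ext_iff, adjN]
  omega

lemma row_center (k : ℕ) (hk : 2 ≤ k) (t : ℝ) :
    ∑ m ∈ range (2 * k + 2), (if adjN k 0 m then (1:ℝ) else 0) * wN k t m
      = 2 * k * (1 / (t - 1)) + 1 / t := by
  rw [Finset.sum_range_succ, Finset.sum_range_succ']
  have h1 : (if adjN k 0 (2 * k + 1) then (1:ℝ) else 0) * wN k t (2 * k + 1) = 1 / t := by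
    rw [if_pos (by unfold adjN; omega)]
    simp [wN]
  have h2 : (if adjN k 0 0 then (1:ℝ) else 0) * wN k t 0 = 0 := by
    rw [if_neg (by unfold adjN; omega)]; ring
  have h3 : ∑ m ∈ range (2 * k), (if adjN k 0 (m + 1) then (1:ℝ) else 0) * wN k t (m + 1)
      = 2 * k * (1 / (t - 1)) := by
    calc ∑ m ∈ range (2 * k), (if adjN k 0 (m + 1) then (1:ℝ) else 0) * wN k t (m + 1)
        = ∑ m ∈ range (2 * k), (1 / (t - 1)) := by
          refine Finset.sum_congr rfl fun m hm => ?_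
          rw [Finset.mem_range] at hm
          rw [if_pos (by unfold adjN; omega)]
          rw [wN, if_neg (by omega), if_neg (by omega)]
          ring
      _ = 2 * k * (1 / (t - 1)) := by
          rw [Finset.sum_const, Finset.card_range, nsmul_eq_mul]
          push_cast; ring
  rw [h1, h2, h3]; ring

lemma row_pendant (k : ℕ) (hk : 2 ≤ k) (t : ℝ) :
    ∑ m ∈ range (2 * k + 2), (if adjN k (2 * k + 1) m then (1:ℝ) else 0) * wN k t m = 1 := by
  calc ∑ m ∈ range (2 * k + 2), (if adjN k (2 * k + 1) m then (1:ℝ) else 0) * wN k t m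
      = ∑ m ∈ range (2 * k + 2), (if m = 0 then (1:ℝ) else 0) := by
        refine Finset.sum_congr rfl fun m hm => ?_
        by_cases h : m = 0
        · subst h
          rw [if_pos (by unfold adjN; omega), if_pos rfl, wN, if_pos rfl]; ring
        · rw [if_neg (by unfold adjN; omega), if_neg h]; ring
    _ = 1 := by
        rw [Finset.sum_ite_eq' (range (2 * k + 2)) 0 (fun _ => (1:ℝ))]
        rw [if_pos (by rw [Finset.mem_range]; omega)]

lemma row_tri (k : ℕ) (hk : 2 ≤ k) (t : ℝ) (v : ℕ) (hv1 : 1 ≤ v) (hv2 : v ≤ 2 * k) :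
    ∑ m ∈ range (2 * k + 2), (if adjN k v m then (1:ℝ) else 0) * wN k t m
      = 1 + 1 / (t - 1) := by
  obtain ⟨p, hp1, hp2, hp3, hpu⟩ :
      ∃ p, (1 ≤ p ∧ p ≤ 2 * k) ∧ p ≠ v ∧ (v - 1) / 2 = (p - 1) / 2 ∧
        ∀ m, m ≠ v → 1 ≤ m → m ≤ 2 * k → (v - 1) / 2 = (m - 1) / 2 → m = p := by
    by_cases h : v % 2 = 1
    · exact ⟨v + 1, ⟨by omega, by omega⟩, by omega, by omega, fun m h1 h2 h3 h4 => by omega⟩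
    · exact ⟨v - 1, ⟨by omega, by omega⟩, by omega, by omega, fun m h1 h2 h3 h4 => by omega⟩
  calc ∑ m ∈ range (2 * k + 2), (if adjN k v m then (1:ℝ) else 0) * wN k t m
      = ∑ m ∈ range (2 * k + 2),
          ((if m = 0 then (1:ℝ) else 0) + (if m = p then (1 / (t - 1)) else 0)) := by
        refine Finset.sum_congr rfl fun m hm => ?_
        by_cases h0 : m = 0
        · subst h0
          rw [if_pos (by unfold adjN; omega), if_pos rfl, if_neg (by omega), wN, if_pos rfl]
          ring
        · by_cases hp : m = p
          · subst hp
            rw [if_pos (by unfold adjN; omega), if_neg h0, if_pos rfl]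
            rw [wN, if_neg h0, if_neg (by omega)]
            ring
          · rw [if_neg ?_, if_neg h0, if_neg hp]
            · ring
            · unfold adjN
              intro ⟨ha, hb⟩
              rcases hb with hb | hb | hb
              · omega
              · exact h0 hb
              · exact hp (hpu m (by omega) (by omega) (by omega) (by omega))
    _ = 1 + 1 / (t - 1) := by
        rw [Finset.sum_add_distrib,
          Finset.sum_ite_eq' (range (2 * k + 2)) 0 (fun _ => (1:ℝ)),
          Finset.sum_ite_eq' (range (2 * k + 2)) p (fun _ => 1 / (t - 1)),
          if_pos (by rw [Finset.mem_range]; omega), if_pos (by rw [Finset.mem_range]; omega)]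


theorem stmt_16 (n : ℕ) (hn : 6 ≤ n) (heven : Even n) :
    specRad (friendshipPendant ((n - 2) / 2)) < Real.sqrt (2 * n - 4) := by
  rw [Nat.even_iff] at heven
  set k := (n - 2) / 2 with hkdef
  have hn2 : n = 2 * k + 2 := by omega
  have hk : 2 ≤ k := by omega
  haveI : DecidableRel (friendshipPendant k).Adj := Classical.decRel _
  unfold specRad
  set t := Real.sqrt (4 * (k:ℝ) - 1/2) with htdef
  have hkc : (2:ℝ) ≤ (k:ℝ) := by exact_mod_cast hk
  have hqnn : (0:ℝ) ≤ 4 * (k:ℝ) - 1/2 := by linarith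
  have ht2 : t ^ 2 = 4 * (k:ℝ) - 1/2 := Real.sq_sqrt hqnn
  have ht0 : 0 ≤ t := Real.sqrt_nonneg _
  have htgt2 : 2 < t := by nlinarith [ht2, ht0, hkc]
  have ht1 : (0:ℝ) < t - 1 := by linarith
  have htp : (0:ℝ) < t := by linarith
  have hw : ∀ j : Fin (2 * k + 2), 0 < wN k t j.val := by
    intro j
    unfold wN
    split_ifs <;> positivity
  have hcube : (8 * (k:ℝ) - 3) ≤ (4 * (k:ℝ) - 3) * t := by
    have key : ((8:ℝ) * k - 3) ^ 2 ≤ ((4 * (k:ℝ) - 3) * t) ^ 2 := by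
      nlinarith [ht2, hkc, sq_nonneg ((k:ℝ) - 2),
        mul_nonneg (sub_nonneg.2 hkc) (sq_nonneg ((k:ℝ) - 2))]
    nlinarith [key, ht0, hkc]
  rw [Subsingleton.elim (Fintype.ofFinite (Fin (2 * k + 2))) (Fin.fintype (2 * k + 2)),
    Subsingleton.elim (Classical.decEq (Fin (2 * k + 2))) (instDecidableEqFin (2 * k + 2))]
  set M := @SimpleGraph.adjMatrix ℝ (Fin (2 * k + 2)) (friendshipPendant k)
    (Classical.decRel _) _ _ with hMdef
  have hrow : ∀ i : Fin (2 * k + 2), ∑ j, |M i j| * wN k t j.val ≤ t * wN k t i.val := by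
    intro i
    have hsum : ∑ j, |M i j| * wN k t j.val
        = ∑ m ∈ range (2 * k + 2), (if adjN k i.val m then (1:ℝ) else 0) * wN k t m := by
      rw [← Fin.sum_univ_eq_sum_range
        (fun m => (if adjN k i.val m then (1:ℝ) else 0) * wN k t m) (2 * k + 2)]
      refine Finset.sum_congr rfl fun j _ => ?_
      rw [hMdef, SimpleGraph.adjMatrix_apply]
      by_cases h : (friendshipPendant k).Adj i j
      · rw [if_pos h, if_pos ((adj_iff k i j).1 h)]
        norm_num
      · rw [if_neg h, if_neg (fun hc => h ((adj_iff k i j).2 hc))]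
        norm_num
    rw [hsum]
    have hiv := i.isLt
    rcases Nat.lt_or_ge 0 i.val with h0 | h0
    · rcases Nat.lt_or_ge i.val (2 * k + 1) with h1 | h1
      · -- triangle vertex
        rw [row_tri k hk t i.val (by omega) (by omega)]
        have hwi : wN k t i.val = 1 / (t - 1) := by
          rw [wN, if_neg (by omega), if_neg (by omega)]
        rw [hwi]
        have heq : t * (1 / (t - 1)) = 1 + 1 / (t - 1) := by
          field_simp
          ring
        rw [heq]
      · -- pendant vertex
        have hiv2 : i.val = 2 * k + 1 := by omega
        rw [hiv2, row_pendant k hk t]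
        have hwi : wN k t (2 * k + 1) = 1 / t := by
          rw [wN, if_neg (by omega), if_pos rfl]
        rw [hwi]
        rw [mul_one_div, div_self (ne_of_gt htp)]
    · -- center vertex
      have hiv0 : i.val = 0 := by omega
      rw [hiv0, row_center k hk t]
      have hwi : wN k t 0 = 1 := by rw [wN, if_pos rfl]
      rw [hwi, mul_one]
      have e0 : 2 * (k:ℝ) * (1 / (t - 1)) + 1 / t = (2 * k * t + (t - 1)) / ((t - 1) * t) := by
        field_simp
      rw [e0, div_le_iff₀ (by positivity)]
      have e1 : t * ((t - 1) * t) = (4 * (k:ℝ) - 1/2) * (t - 1) := by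
        have : t * ((t - 1) * t) = t ^ 2 * (t - 1) := by ring
        rw [this, ht2]
      rw [e1]
      nlinarith [hcube]
  have hfin : sSup (spectrum ℝ M) ≤ t := by
    refine Real.sSup_le (fun μ hμ => ?_) ht0
    exact le_trans (le_abs_self μ) (gersh M (fun j => wN k t j.val) t hw hrow μ hμ)
  refine lt_of_le_of_lt hfin ?_
  have hn' : (n:ℝ) = 2 * (k:ℝ) + 2 := by
    rw [hn2]; push_cast; ring
  rw [htdef]
  refine Real.sqrt_lt_sqrt hqnn ?_
  rw [hn']
  linarith
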